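/- Let (Q, S, μ) be a fuzzy skill multimap such that for each q ∈ Q and each C ∈ μ(q) there exists a molecule T with T ⊆ C and T ∈ μ(q), and let (Q, 𝒦) be the delineated knowledge structure. Then for every K ∈ 𝒦 and every q ∈ Q \ K, one has K ∪ {q} ∈ 𝒦 (i.e. q is in the outer fringe of K) if and only if there exists a molecule T ∈ μ(q) with p(T) \ K = {q}. -/
import Mathlib


/-- A fuzzy set on a set `S` of skills: a function `S → [0,1]`, ordered pointwise. -/
abbrev FuzzySet (S : Type*) := S → unitInterval

/-- The problem function induced by a fuzzy skill multimap `μ`: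
`p(F) = {q | ∃ C ∈ μ(q), C ⊆ F}`. -/
def pfun {Q S : Type*} (μ : Q → Set (FuzzySet S)) (F : FuzzySet S) : Set Q :=
  {q | ∃ C ∈ μ q, C ≤ F}

/-- The knowledge structure delineated by a fuzzy skill multimap `μ`. -/
def delineated {Q S : Type*} (μ : Q → Set (FuzzySet S)) : Set (Set Q) :=
  Set.range (pfun μ)

/-- `𝒦_q = {K ∈ 𝒦 | q ∈ K}`. -/
def Kq {Q : Type*} (𝒦 : Set (Set Q)) (q : Q) : Set (Set Q) := {K ∈ 𝒦 | q ∈ K}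

/-- A knowledge structure is discriminative if `𝒦_q ≠ 𝒦_r` for distinct `q, r`. -/
def Discriminative {Q : Type*} (𝒦 : Set (Set Q)) : Prop :=
  ∀ q r : Q, q ≠ r → Kq 𝒦 q ≠ Kq 𝒦 r

/-- A knowledge structure is bi-discriminative if `𝒦_q ⊄ 𝒦_r` and `𝒦_r ⊄ 𝒦_q`
for distinct `q, r`. -/
def BiDiscriminative {Q : Type*} (𝒦 : Set (Set Q)) : Prop :=
  ∀ q r : Q, q ≠ r → ¬ Kq 𝒦 q ⊆ Kq 𝒦 r ∧ ¬ Kq 𝒦 r ⊆ Kq 𝒦 q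

/-- `μ` is a fuzzy skill multimap: each `μ(q)` is a nonempty family of nonzero fuzzy sets. -/
def FSM {Q S : Type*} (μ : Q → Set (FuzzySet S)) : Prop :=
  ∀ q, (μ q).Nonempty ∧ ∀ C ∈ μ q, C ≠ 0

/-- A molecule: a fuzzy set with exactly one skill of nonzero membership. -/
def Molecule {S : Type*} (T : FuzzySet S) : Prop := ∃! s, T s ≠ 0

/-- A knowledge space: a knowledge structure closed under unions of arbitrary subfamilies. -/
def IsKSpace {Q : Type*} (𝒦 : Set (Set Q)) : Prop :=
  ∅ ∈ 𝒦 ∧ Set.univ ∈ 𝒦 ∧ ∀ 𝒮 ⊆ 𝒦, ⋃₀ 𝒮 ∈ 𝒦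

/-- Under the molecule condition, for `K ∈ 𝒦` and `q ∈ Q \ K`, the item
`q` belongs to the outer fringe of `K` (i.e. `K ∪ {q} ∈ 𝒦`) iff there is a molecule
`T ∈ μ(q)` with `p(T) \ K = {q}`. -/
theorem stmt_7 {Q S : Type*} [Nonempty Q] [Nonempty S]
    (μ : Q → Set (FuzzySet S)) (hFSM : FSM μ)
    (hmol : ∀ q, ∀ C ∈ μ q, ∃ T : FuzzySet S, Molecule T ∧ T ≤ C ∧ T ∈ μ q) :
    ∀ K ∈ delineated μ, ∀ q : Q, q ∉ K →
      (K ∪ {q} ∈ delineated μ ↔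
        ∃ T ∈ μ q, Molecule T ∧ pfun μ T \ K = {q}) := by

  intro K hK q hq
  obtain ⟨F, hF⟩ := hK
  constructor
  · rintro ⟨G, hG⟩
    have hqG : q ∈ pfun μ G := by rw [hG]; right; rfl
    obtain ⟨C, hC, hCG⟩ := hqG
    obtain ⟨T, hTmol, hTC, hTμ⟩ := hmol q C hC
    refine ⟨T, hTμ, hTmol, ?_⟩
    have hsub : pfun μ T ⊆ K ∪ {q} := by
      rw [← hG]
      rintro r ⟨C', hC', hC'T⟩
      exact ⟨C', hC', le_trans hC'T (le_trans hTC hCG)⟩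
    ext r
    simp only [Set.mem_diff, Set.mem_singleton_iff]
    constructor
    · rintro ⟨hr, hrK⟩
      rcases hsub hr with h | h
      · exact absurd h hrK
      · exact h
    · rintro rfl
      exact ⟨⟨T, hTμ, le_refl T⟩, hq⟩
  · rintro ⟨T, hTμ, ⟨s₀, hs₀, huniq⟩, hpT⟩
    refine ⟨F ⊔ T, ?_⟩
    ext r
    simp only [Set.mem_union, Set.mem_singleton_iff]
    constructor
    · rintro ⟨C, hC, hCFT⟩
      by_contra hcon
      push_neg at hcon
      obtain ⟨hrK, hrq⟩ := hcon
      obtain ⟨T', ⟨s', hs', huniq'⟩, hT'C, hT'μ⟩ := hmol r C hC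
      have hT'FT : T' ≤ F ⊔ T := le_trans hT'C hCFT
      have hzero : ∀ s, s ≠ s' → T' s = 0 := by
        intro s hne
        by_contra h
        exact hne (huniq' s h)
      rcases le_sup_iff.mp (hT'FT s') with hle | hle
      · have hTF : T' ≤ F := by
          intro s
          by_cases h : s = s'
          · subst h; exact hle
          · rw [hzero s h]; exact unitInterval.nonneg'
        have : r ∈ K := hF ▸ ⟨T', hT'μ, hTF⟩
        exact hrK this
      · have hTs'ne : T s' ≠ 0 := by
          intro h
          rw [h] at hle
          exact hs' (le_antisymm (le_trans hle unitInterval.nonneg') unitInterval.nonneg')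
        have hT'T : T' ≤ T := by
          intro s
          by_cases h : s = s'
          · subst h; exact hle
          · rw [hzero s h]; exact unitInterval.nonneg'
        have : r ∈ pfun μ T \ K := ⟨⟨T', hT'μ, hT'T⟩, hrK⟩
        rw [hpT] at this
        exact hrq this
    · rintro (h | rfl)
      · have h' : r ∈ pfun μ F := hF ▸ h
        obtain ⟨C, hC, hCF⟩ := h'
        exact ⟨C, hC, le_trans hCF le_sup_left⟩
      · exact ⟨T, hTμ, le_sup_right⟩
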